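/- In Construction 2, suppose a half-sum z = Σ_{i=1}^n γ_i a_i x_i + Σ_{i=n+1}^{n+r} γ_i x_i (γ_i ∈ {−1,0,1}, not all γ equal to the full sign vector, i.e., some γ_i = 0) lies in some block D_{a'} of the construction. Then γ_i ≠ 0 for all i ∈ [n], and there exists at least one index s ∈ [n+1 : n+r] with γ_s = 0 (the Tail–Zero property). -/
import Mathlib

lemma lemA (n : ℕ) (m x : ℕ → ℕ) (hx1 : x 1 = 1)
    (hxk : ∀ k, 2 ≤ k → k ≤ n →
      (x k : ℤ) = 2 * (∑ j ∈ Finset.Icc 1 (k-1), (m j : ℤ) * (x j : ℤ)) + 1) :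
    ∀ k, 1 ≤ k → k ≤ n → ∀ e : ℕ → ℤ,
      (∀ j, 1 ≤ j → j ≤ k → |e j| ≤ 2 * (m j : ℤ)) →
      ∀ c : ℤ, (∑ j ∈ Finset.Icc 1 k, e j * (x j : ℤ)) = c * (x k : ℤ) →
      (∀ j, 1 ≤ j → j < k → e j = 0) ∧ e k = c := by
  intro k hk
  induction k, hk using Nat.le_induction with
  | base =>
    intro hkn e he c hsum
    simp only [Finset.Icc_self, Finset.sum_singleton, hx1, Nat.cast_one, mul_one] at hsum
    exact ⟨fun j hj hj' => absurd hj (by omega), hsum⟩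
  | succ k hk ih =>
    intro hkn e he c hsum
    have hkn' : k ≤ n := by omega
    rw [Finset.sum_Icc_succ_top (by omega : 1 ≤ k + 1)] at hsum
    have hxe : (x (k+1) : ℤ) = 2 * (∑ j ∈ Finset.Icc 1 k, (m j : ℤ) * (x j : ℤ)) + 1 := by
      have := hxk (k+1) (by omega) hkn
      simpa using this
    have hB : (∑ j ∈ Finset.Icc 1 k, e j * (x j : ℤ)) = (c - e (k+1)) * (x (k+1) : ℤ) := by
      linarith [hsum]
    have hbound : |∑ j ∈ Finset.Icc 1 k, e j * (x j : ℤ)|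
        ≤ ∑ j ∈ Finset.Icc 1 k, 2 * (m j : ℤ) * (x j : ℤ) := by
      refine (Finset.abs_sum_le_sum_abs _ _).trans (Finset.sum_le_sum ?_)
      intro j hj
      rw [Finset.mem_Icc] at hj
      rw [abs_mul, abs_of_nonneg (by positivity : (0:ℤ) ≤ (x j : ℤ))]
      exact mul_le_mul_of_nonneg_right (he j hj.1 (by omega)) (by positivity)
    have hsum2 : ∑ j ∈ Finset.Icc 1 k, 2 * (m j : ℤ) * (x j : ℤ)
        = 2 * ∑ j ∈ Finset.Icc 1 k, (m j : ℤ) * (x j : ℤ) := by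
      rw [Finset.mul_sum]; exact Finset.sum_congr rfl fun i _ => by ring
    have hxpos : (0:ℤ) < (x (k+1) : ℤ) := by
      have hS : (0:ℤ) ≤ ∑ j ∈ Finset.Icc 1 k, (m j : ℤ) * (x j : ℤ) :=
        Finset.sum_nonneg fun j _ => by positivity
      linarith [hxe]
    have habs : |c - e (k+1)| * (x (k+1) : ℤ) < (x (k+1) : ℤ) := by
      have h1 : |(c - e (k+1)) * (x (k+1) : ℤ)| < (x (k+1) : ℤ) := by
        rw [← hB]
        exact lt_of_le_of_lt (hbound.trans_eq hsum2) (by linarith [hxe])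
      rwa [abs_mul, abs_of_pos hxpos] at h1
    have hce : c = e (k+1) := by
      by_contra hne
      have h1 : 1 ≤ |c - e (k+1)| := Int.one_le_abs (by omega)
      nlinarith [habs, hxpos]
    have hB0 : (∑ j ∈ Finset.Icc 1 k, e j * (x j : ℤ)) = 0 * (x k : ℤ) := by
      rw [hB, ← hce]; ring
    obtain ⟨h0, hek⟩ := ih hkn' e (fun j hj hjk => he j hj (by omega)) 0 hB0
    refine ⟨fun j hj hjk => ?_, hce.symm⟩
    rcases Nat.lt_or_ge j k with h | h
    · exact h0 j hj h
    · have : j = k := by omega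
      rw [this]; exact hek



/-- Tail–Zero property: in Construction 2, suppose a half-sum
`z = ∑_{i=1}^n γ i * a i * x i + ∑_{i=n+1}^{n+r} γ i * x i` with `γ i ∈ {−1,0,1}` and
some `γ i = 0`, lies in some block `D_{a'}` of the construction (i.e. `z` is
representable with a sign vector `β ∈ {±1}^{n+r}` and coefficients `a' i ∈ [m i]`).
Then `γ i ≠ 0` for all `i ∈ [n]`, and there is an index `s ∈ [n+1 : n+r]` with
`γ s = 0`. -/
theorem stmt_11 (L r n : ℕ) (hL : 0 < L) (hr : 0 < r) (hLr : L ≤ 2 ^ r) (hn : 0 < n)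
    (m f : ℕ → ℕ) (hm : ∀ i, 0 < m i)
    (hm1 : ∀ i, n + 1 ≤ i → i ≤ n + r → m i = 1)
    (hf1 : f 1 = m 1)
    (hf2 : ∀ i, 2 ≤ i → i ≤ n → f i = m i * (2 * (∑ j ∈ Finset.Icc 1 (i - 1), f j) + 1))
    (hdvd : ∀ i, 1 ≤ i → i ≤ n + r → m i ∣ f i)
    (hf3 : ∀ i, n + 1 ≤ i → i ≤ n + r - 1 →
      f i = (m (i - 1) + 1) * (f (i - 1) / m (i - 1)))
    (hf4 : f (n + r) =
      (m (n + r - 1) + 1) * (f (n + r - 1) / m (n + r - 1)) + (2 ^ r - L) * f (n + 1))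
    (x : ℕ → ℕ) (hx : ∀ i, x i * m i = f i)
    (a : ℕ → ℕ) (ha : ∀ i, 1 ≤ i → i ≤ n → 1 ≤ a i ∧ a i ≤ m i)
    (γ : ℕ → ℤ)
    (hγ : ∀ i, 1 ≤ i → i ≤ n + r → γ i = -1 ∨ γ i = 0 ∨ γ i = 1)
    (hγ0 : ∃ i, 1 ≤ i ∧ i ≤ n + r ∧ γ i = 0)
    (z : ℤ)
    (hz : z = (∑ i ∈ Finset.Icc 1 n, γ i * ((a i : ℤ) * (x i : ℤ))) +
      ∑ i ∈ Finset.Icc (n + 1) (n + r), γ i * (x i : ℤ))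
    (hmem : ∃ (a' : ℕ → ℕ) (β : ℕ → ℤ),
      (∀ i, 1 ≤ i → i ≤ n → 1 ≤ a' i ∧ a' i ≤ m i) ∧
      (∀ i, 1 ≤ i → i ≤ n + r → β i = 1 ∨ β i = -1) ∧
      z = (∑ i ∈ Finset.Icc 1 n, β i * ((a' i : ℤ) * (x i : ℤ))) +
        ∑ i ∈ Finset.Icc (n + 1) (n + r), β i * (x i : ℤ)) :
    (∀ i, 1 ≤ i → i ≤ n → γ i ≠ 0) ∧ ∃ s, n + 1 ≤ s ∧ s ≤ n + r ∧ γ s = 0 := by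
  obtain ⟨a', β, ha', hβ, hz'⟩ := hmem
  -- basic positivity
  have hfx : ∀ j, f j = m j * x j := fun j => by rw [← hx j]; ring
  have hfn_pos : 0 < f n := by
    rcases Nat.lt_or_ge n 2 with h | h
    · have : n = 1 := by omega
      rw [this, hf1]; exact hm 1
    · rw [hf2 n h le_rfl]
      exact Nat.mul_pos (hm n) (by omega)
  have hxn_pos : 0 < x n := by
    rcases Nat.eq_zero_or_pos (x n) with h | h
    · exfalso; have := hx n; rw [h] at this; simp at this; omega
    · exact h
  have hx1 : x 1 = 1 := by
    have h1 : x 1 * m 1 = 1 * m 1 := by rw [hx 1, hf1, one_mul]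
    exact Nat.eq_of_mul_eq_mul_right (hm 1) h1
  -- x k = 2 * (sum of m j * x j) + 1 for 2 ≤ k ≤ n
  have hxk_nat : ∀ k, 2 ≤ k → k ≤ n →
      x k = 2 * (∑ j ∈ Finset.Icc 1 (k-1), m j * x j) + 1 := by
    intro k h2 hkn
    have h1 : x k * m k = (2 * (∑ j ∈ Finset.Icc 1 (k-1), m j * x j) + 1) * m k := by
      rw [hx k, hf2 k h2 hkn]
      have : ∑ j ∈ Finset.Icc 1 (k-1), f j = ∑ j ∈ Finset.Icc 1 (k-1), m j * x j :=
        Finset.sum_congr rfl fun j _ => hfx j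
      rw [this]; ring
    exact Nat.eq_of_mul_eq_mul_right (hm k) h1
  have hxkZ : ∀ k, 2 ≤ k → k ≤ n →
      (x k : ℤ) = 2 * (∑ j ∈ Finset.Icc 1 (k-1), (m j : ℤ) * (x j : ℤ)) + 1 := by
    intro k h2 hkn
    have := hxk_nat k h2 hkn
    push_cast [this]
    ring
  -- f(n+1) = (m n + 1) * x n
  have hxdiv : f n / m n = x n := by
    rw [← hx n]; exact Nat.mul_div_cancel (x n) (hm n)
  have hF : f (n+1) = (m n + 1) * x n := by
    rcases Nat.lt_or_ge r 2 with h | h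
    · -- r = 1
      have hr1 : r = 1 := by omega
      have h4 := hf4
      rw [hr1] at h4
      simp only [Nat.add_sub_cancel] at h4
      rw [hxdiv] at h4
      have hL2 : L ≤ 2 := by rw [hr1] at hLr; simpa using hLr
      interval_cases L
      · exfalso
        have : (m n + 1) * x n = 0 := by omega
        have : 0 < (m n + 1) * x n := Nat.mul_pos (by omega) hxn_pos
        omega
      · simpa using h4
    · have h3 := hf3 (n+1) le_rfl (by omega)
      simp only [Nat.add_sub_cancel] at h3
      rw [hxdiv] at h3
      exact h3
  have hFpos : 0 < f (n+1) := by rw [hF]; exact Nat.mul_pos (by omega) hxn_pos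
  -- divisibility of tail f's by f(n+1)
  have hd1 : ∀ j, n+1 ≤ j → j ≤ n+r-1 → f (n+1) ∣ f j := by
    intro j hj
    induction j, hj using Nat.le_induction with
    | base => intro _; exact dvd_rfl
    | succ j hj ih =>
      intro hj2
      have hmj : m j = 1 := hm1 j hj (by omega)
      have h3 := hf3 (j+1) (by omega) hj2
      simp only [Nat.add_sub_cancel, hmj, Nat.div_one] at h3
      rw [h3]
      exact Dvd.dvd.mul_left (ih (by omega)) 2
  have hd : ∀ j, n+1 ≤ j → j ≤ n+r → f (n+1) ∣ f j := by
    intro j h1 h2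
    rcases Nat.lt_or_ge j (n+r) with h | h
    · exact hd1 j h1 (by omega)
    · have hj : j = n + r := by omega
      rcases Nat.lt_or_ge r 2 with hr2 | hr2
      · have : j = n + 1 := by omega
        rw [this]
      · have hmj : m (n+r-1) = 1 := hm1 (n+r-1) (by omega) (by omega)
        have h4 := hf4
        rw [hmj, Nat.div_one] at h4
        rw [hj, h4]
        exact dvd_add (Dvd.dvd.mul_left (hd1 (n+r-1) (by omega) le_rfl) _) (dvd_mul_left _ _)
  -- main equation
  set e : ℕ → ℤ := fun j => γ j * a j - β j * a' j with he_def
  set T : ℤ := ∑ i ∈ Finset.Icc (n+1) (n+r), (γ i - β i) * (x i : ℤ) with hT_def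
  have heq : (∑ i ∈ Finset.Icc 1 n, e i * (x i : ℤ)) + T = 0 := by
    have h0 : (∑ i ∈ Finset.Icc 1 n, γ i * ((a i : ℤ) * (x i : ℤ))) +
        (∑ i ∈ Finset.Icc (n+1) (n+r), γ i * (x i : ℤ)) =
        (∑ i ∈ Finset.Icc 1 n, β i * ((a' i : ℤ) * (x i : ℤ))) +
        (∑ i ∈ Finset.Icc (n+1) (n+r), β i * (x i : ℤ)) := by
      rw [← hz, ← hz']
    have e1 : ∑ i ∈ Finset.Icc 1 n, e i * (x i : ℤ)
        = (∑ i ∈ Finset.Icc 1 n, γ i * ((a i : ℤ) * (x i : ℤ)))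
          - ∑ i ∈ Finset.Icc 1 n, β i * ((a' i : ℤ) * (x i : ℤ)) := by
      rw [← Finset.sum_sub_distrib]
      exact Finset.sum_congr rfl fun i _ => by simp [he_def]; ring
    have e2 : T = (∑ i ∈ Finset.Icc (n+1) (n+r), γ i * (x i : ℤ))
          - ∑ i ∈ Finset.Icc (n+1) (n+r), β i * (x i : ℤ) := by
      rw [hT_def, ← Finset.sum_sub_distrib]
      exact Finset.sum_congr rfl fun i _ => by ring
    rw [e1, e2]; linarith [h0]
  -- divisibility of T
  have hTd : (f (n+1) : ℤ) ∣ T := by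
    apply Finset.dvd_sum
    intro i hi
    rw [Finset.mem_Icc] at hi
    have hxi : x i = f i := by
      have := hx i
      rw [hm1 i hi.1 hi.2, mul_one] at this
      exact this
    apply Dvd.dvd.mul_left
    rw [hxi]
    exact_mod_cast Int.natCast_dvd_natCast.mpr (hd i hi.1 hi.2)
  -- bound on head coefficients
  have he_abs : ∀ j, 1 ≤ j → j ≤ n → |e j| ≤ 2 * (m j : ℤ) := by
    intro j h1 h2
    have hja := ha j h1 h2
    have hja' := ha' j h1 h2
    rcases hγ j h1 (by omega) with h | h | h <;>
      rcases hβ j h1 (by omega) with h' | h' <;>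
      simp only [he_def, h, h'] <;> rw [abs_le] <;> constructor <;>
      push_cast <;> omega
  -- bound on head sum
  have hSn : (∑ j ∈ Finset.Icc 1 n, m j * x j) < f (n+1) := by
    have hsplit : ∑ j ∈ Finset.Icc 1 n, m j * x j
        = (∑ j ∈ Finset.Icc 1 (n-1), m j * x j) + m n * x n := by
      have : n = (n-1) + 1 := by omega
      rw [this, Finset.sum_Icc_succ_top (by omega : 1 ≤ n - 1 + 1), ← this]
    have hlt : (∑ j ∈ Finset.Icc 1 (n-1), m j * x j) < x n := by
      rcases Nat.lt_or_ge n 2 with h | h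
      · have : n = 1 := by omega
        rw [this]; simp [hx1]
      · have := hxk_nat n h le_rfl
        omega
    have hr2 : (m n + 1) * x n = m n * x n + x n := by ring
    rw [hsplit, hF, hr2]; omega
  have hHb : |∑ j ∈ Finset.Icc 1 n, e j * (x j : ℤ)| < 2 * (f (n+1) : ℤ) := by
    have h1 : |∑ j ∈ Finset.Icc 1 n, e j * (x j : ℤ)|
        ≤ ∑ j ∈ Finset.Icc 1 n, 2 * (m j : ℤ) * (x j : ℤ) := by
      refine (Finset.abs_sum_le_sum_abs _ _).trans (Finset.sum_le_sum ?_)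
      intro j hj
      rw [Finset.mem_Icc] at hj
      rw [abs_mul, abs_of_nonneg (by positivity : (0:ℤ) ≤ (x j : ℤ))]
      exact mul_le_mul_of_nonneg_right (he_abs j hj.1 hj.2) (by positivity)
    have h2 : ∑ j ∈ Finset.Icc 1 n, 2 * (m j : ℤ) * (x j : ℤ)
        = 2 * ((∑ j ∈ Finset.Icc 1 n, m j * x j : ℕ) : ℤ) := by
      push_cast [Finset.mul_sum]
      exact Finset.sum_congr rfl fun i _ => by ring
    have h3 : ((∑ j ∈ Finset.Icc 1 n, m j * x j : ℕ) : ℤ) < (f (n+1) : ℤ) := by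
      exact_mod_cast hSn
    linarith
  -- T is a small multiple of f(n+1)
  obtain ⟨t, ht⟩ := hTd
  have hTH : T = -(∑ j ∈ Finset.Icc 1 n, e j * (x j : ℤ)) := by linarith [heq]
  have hFposZ : (0:ℤ) < (f (n+1) : ℤ) := by exact_mod_cast hFpos
  have ht1 : |t| ≤ 1 := by
    by_contra hcon
    have h2 : 2 ≤ |t| := by omega
    have : |T| = (f (n+1) : ℤ) * |t| := by rw [ht, abs_mul, abs_of_pos hFposZ]
    rw [hTH, abs_neg] at this
    nlinarith [hHb]
  -- head sum equals c * x n
  have hFZ : (f (n+1) : ℤ) = ((m n : ℤ) + 1) * (x n : ℤ) := by exact_mod_cast hF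
  have hHead : (∑ j ∈ Finset.Icc 1 n, e j * (x j : ℤ))
      = (-t * ((m n : ℤ) + 1)) * (x n : ℤ) := by
    have : (∑ j ∈ Finset.Icc 1 n, e j * (x j : ℤ)) = -T := by linarith [heq]
    rw [this, ht, hFZ]; ring
  obtain ⟨hzero, hen⟩ := lemA n m x hx1 hxkZ n hn le_rfl e he_abs _ hHead
  -- head γ's are nonzero
  have hhead : ∀ i, 1 ≤ i → i ≤ n → γ i ≠ 0 := by
    intro i h1 h2 hg0
    have hja' := ha' i h1 h2
    rcases Nat.lt_or_ge i n with hlt | hge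
    · have h0 := hzero i h1 hlt
      simp only [he_def, hg0, zero_mul, zero_sub, neg_eq_zero, mul_eq_zero] at h0
      rcases h0 with h | h
      · rcases hβ i h1 (by omega) with h' | h' <;> rw [h'] at h <;> norm_num at h
      · have : a' i = 0 := by exact_mod_cast h
        omega
    · have hin : i = n := by omega
      rw [hin] at hg0 hja'
      have hen' : (0:ℤ) * (a n : ℤ) - β n * (a' n : ℤ) = -t * ((m n : ℤ) + 1) := by
        rw [← hg0]; exact hen
      have htc : t = -1 ∨ t = 0 ∨ t = 1 := by
        rw [abs_le] at ht1; omega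
      rcases hβ n (by omega) (by omega) with h' | h' <;> rw [h'] at hen' <;>
        rcases htc with h | h | h <;> rw [h] at hen' <;> push_cast at hen' <;> omega
  refine ⟨hhead, ?_⟩
  obtain ⟨i, h1, h2, h0⟩ := hγ0
  refine ⟨i, ?_, h2, h0⟩
  by_contra hcon
  exact hhead i h1 (by omega) h0
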